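/- Define the [A-DBH-SD] critical values by τ_k = max{t ∈ A : F_i(t) < 1 for all i, and for every subset S ⊆ {1,…,m} with |S| = m−k+1, Σ_{i∈S} F_i(t)/(1−F_i(t)) ≤ αk} for 1 ≤ k ≤ m. Then the rejection set of the step-down procedure SD(τ) contains the rejection set of the step-down procedure with the Gavrilov–Benjamini–Sarkar critical values ξ_k = αk/(m−(1−α)k+1) for 1 ≤ k ≤ m. -/

import Mathlib

open MeasureTheory ProbabilityTheory Finset

/-- Number of rejections of the step-up procedure with critical values `τ 1, …, τ m`
(convention `τ 0 = 0`): the largest `k ∈ {0, …, m}` such that at least `k` of the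
p-values are `≤ τ k`. -/
noncomputable def numRejSU (m : ℕ) (τ : ℕ → ℝ) (q : Fin m → ℝ) : ℕ :=
  sSup {k | k ≤ m ∧ k ≤ (univ.filter (fun j => q j ≤ τ k)).card}

/-- Rejection set of the step-up procedure. -/
noncomputable def rejSU (m : ℕ) (τ : ℕ → ℝ) (q : Fin m → ℝ) : Finset (Fin m) :=
  univ.filter (fun i => q i ≤ τ (numRejSU m τ q))

/-- Number of rejections of the step-down procedure with critical values `τ 1, …, τ m`
(convention `τ 0 = 0`). -/
noncomputable def numRejSD (m : ℕ) (τ : ℕ → ℝ) (q : Fin m → ℝ) : ℕ :=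
  sSup {k | k ≤ m ∧ ∀ k' ≤ k, k' ≤ (univ.filter (fun j => q j ≤ τ k')).card}

/-- Rejection set of the step-down procedure. -/
noncomputable def rejSD (m : ℕ) (τ : ℕ → ℝ) (q : Fin m → ℝ) : Finset (Fin m) :=
  univ.filter (fun i => q i ≤ τ (numRejSD m τ q))

/-- [A-DBH-SD] rejects at least as much as the
Gavrilov-Benjamini-Sarkar step-down procedure. -/
theorem A_DBH_SD_rejects_more_than_GBS
    (m : ℕ) (hm : 1 ≤ m) (α : ℝ) (hα : α ∈ Set.Ioo (0 : ℝ) 1)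
    (A : Finset ℝ) (hA0 : (0 : ℝ) ∈ A) (hA : ∀ t ∈ A, t ∈ Set.Icc (0 : ℝ) 1)
    (p : Fin m → ℝ) (hp : ∀ i, p i ∈ A)
    (F : Fin m → ℝ → ℝ)
    (hFmono : ∀ i, MonotoneOn (F i) (Set.Icc 0 1))
    (hFrange : ∀ i, ∀ t ∈ Set.Icc (0 : ℝ) 1, F i t ∈ Set.Icc (0 : ℝ) 1)
    (hF0 : ∀ i, F i 0 = 0) (hF1 : ∀ i, F i 1 = 1)
    (hFsup : ∀ i, ∀ t ∈ Set.Icc (0 : ℝ) 1, F i t ≤ t)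
    (τ : ℕ → ℝ) (hτ0 : τ 0 = 0)
    (hτk : ∀ k, 1 ≤ k → k ≤ m → IsGreatest {t : ℝ | t ∈ A ∧ (∀ i, F i t < 1) ∧
      ∀ S : Finset (Fin m), S.card = m - k + 1 →
        ∑ i ∈ S, F i t / (1 - F i t) ≤ α * k} (τ k))
    :
    rejSD m (fun k => α * k / ((m : ℝ) - (1 - α) * k + 1)) p ⊆ rejSD m τ p := by
  intro i hi
  set ξ : ℕ → ℝ := fun k => α * k / ((m : ℝ) - (1 - α) * k + 1) with hξdef
  obtain ⟨hα0, hα1⟩ := hα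
  have hden : ∀ k, k ≤ m → (0:ℝ) < (m : ℝ) - (1 - α) * k + 1 := by
    intro k hk
    have : (k:ℝ) ≤ m := by exact_mod_cast hk
    nlinarith
  have hξ0 : ξ 0 = 0 := by simp [hξdef]
  have hξmono : ∀ j k, j ≤ k → k ≤ m → ξ j ≤ ξ k := by
    intro j k hjk hk
    have hj : (j:ℝ) ≤ k := by exact_mod_cast hjk
    have hdj := hden j (hjk.trans hk)
    have hdk := hden k hk
    rw [hξdef, div_le_div_iff₀ hdj hdk]
    have hm1 : (0:ℝ) ≤ (m:ℝ) + 1 := by positivity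
    have key : (0:ℝ) ≤ α * ((k:ℝ) - j) * ((m:ℝ) + 1) :=
      mul_nonneg (mul_nonneg hα0.le (by linarith)) hm1
    nlinarith [key]
  have hξlt1 : ∀ k, k ≤ m → ξ k < 1 := by
    intro k hk
    have hdk := hden k hk
    have : (k:ℝ) ≤ m := by exact_mod_cast hk
    rw [hξdef, div_lt_one hdk]
    nlinarith
  have hτnn : ∀ k, k ≤ m → 0 ≤ τ k := by
    intro k hk
    rcases Nat.eq_zero_or_pos k with h0 | h1
    · simp [h0, hτ0]
    · refine (hτk k h1 hk).2 ⟨hA0, ?_, ?_⟩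
      · intro i'
        rw [hF0 i']; norm_num
      · intro S hS
        have hk' : (0:ℝ) < α * k := by positivity
        have : ∑ i' ∈ S, F i' 0 / (1 - F i' 0) = 0 := by
          apply Finset.sum_eq_zero
          intro x _
          rw [hF0 x]; norm_num
        linarith
  -- key lemma
  have hkey : ∀ k, 1 ≤ k → k ≤ m → ∀ t, t ∈ A → t ≤ ξ k → t ≤ τ k := by
    intro k h1 hk t htA htξ
    have htI := hA t htA
    have hξk1 := hξlt1 k hk
    have hFt1 : ∀ i', F i' t < 1 := fun i' =>
      lt_of_le_of_lt (le_trans (hFsup i' t htI) htξ) hξk1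
    refine (hτk k h1 hk).2 ⟨htA, ?_, ?_⟩
    · intro i'
      exact lt_of_le_of_lt (le_trans (hFsup i' t htI) htξ) hξk1
    · intro S hS
      have hdk := hden k hk
      have hkm : (k:ℝ) ≤ m := by exact_mod_cast hk
      have hratio : ξ k / (1 - ξ k) = α * k / ((m:ℝ) - k + 1) := by
        have h1ξ : 1 - ξ k = ((m:ℝ) - k + 1) / ((m : ℝ) - (1 - α) * k + 1) := by
          simp only [hξdef]
          rw [one_sub_div hdk.ne']
          congr 1
          ring
        have hmk : (0:ℝ) < (m:ℝ) - k + 1 := by linarith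
        simp only [hξdef, h1ξ]
        rw [one_sub_div hdk.ne', show (m:ℝ) - (1 - α) * k + 1 - α * k = (m:ℝ) - k + 1 by ring, div_div_div_eq]
        rw [div_eq_div_iff (mul_pos hdk hmk).ne' hmk.ne']
        ring
      have hmk1 : (0:ℝ) < (m:ℝ) - k + 1 := by linarith
      have hterm : ∀ i', F i' t / (1 - F i' t) ≤ α * k / ((m:ℝ) - k + 1) := by
        intro i'
        rw [← hratio]
        have ha : F i' t ≤ ξ k := le_trans (hFsup i' t htI) htξ
        have hb : 0 < 1 - ξ k := by linarith
        have hc : 0 < 1 - F i' t := by linarith [hFt1 i']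
        rw [div_le_div_iff₀ hc hb]
        nlinarith
      calc ∑ i' ∈ S, F i' t / (1 - F i' t) ≤ ∑ _i' ∈ S, α * k / ((m:ℝ) - k + 1) :=
            Finset.sum_le_sum (fun x _ => hterm x)
        _ = (S.card : ℝ) * (α * k / ((m:ℝ) - k + 1)) := by rw [Finset.sum_const, nsmul_eq_mul]
        _ = α * k := by
            rw [hS]
            have : ((m - k + 1 : ℕ) : ℝ) = (m:ℝ) - k + 1 := by
              push_cast [Nat.cast_sub hk]
              ring
            rw [this]
            field_simp
  -- numRejSD facts
  have hbdd : ∀ (σ : ℕ → ℝ), BddAbove {k | k ≤ m ∧ ∀ k' ≤ k, k' ≤ (univ.filter (fun j => p j ≤ σ k')).card} :=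
    fun σ => ⟨m, fun k hk => hk.1⟩
  have hne : ∀ (σ : ℕ → ℝ), (0:ℕ) ∈ {k | k ≤ m ∧ ∀ k' ≤ k, k' ≤ (univ.filter (fun j => p j ≤ σ k')).card} := by
    intro σ
    constructor
    · exact Nat.zero_le m
    · intro k' hk'
      omega
  set N := numRejSD m ξ p with hN
  set M := numRejSD m τ p with hM
  have hNmem : N ∈ {k | k ≤ m ∧ ∀ k' ≤ k, k' ≤ (univ.filter (fun j => p j ≤ ξ k')).card} :=
    Nat.sSup_mem ⟨0, hne ξ⟩ (hbdd ξ)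
  have hle : ∀ k', k' ≤ m → ∀ j : Fin m, p j ≤ ξ k' → p j ≤ τ k' := by
    intro k' hk' j hj
    rcases Nat.eq_zero_or_pos k' with h0 | h1
    · rw [h0, hτ0]; rw [h0, hξ0] at hj; exact hj
    · exact hkey k' h1 hk' (p j) (hp j) hj
  have hNmemτ : N ∈ {k | k ≤ m ∧ ∀ k' ≤ k, k' ≤ (univ.filter (fun j => p j ≤ τ k')).card} := by
    refine ⟨hNmem.1, fun k' hk' => ?_⟩
    refine le_trans (hNmem.2 k' hk') (Finset.card_le_card ?_)
    intro j hj
    simp only [Finset.mem_filter, Finset.mem_univ, true_and] at hj ⊢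
    exact hle k' (hk'.trans hNmem.1) j hj
  have hNM : N ≤ M := le_csSup (hbdd τ) hNmemτ
  have hMm : M ≤ m := (Nat.sSup_mem ⟨0, hne τ⟩ (hbdd τ)).1
  -- finish
  simp only [rejSD, Finset.mem_filter, Finset.mem_univ, true_and] at hi ⊢
  have hpi : p i ≤ ξ M := le_trans hi (hξmono N M hNM hMm)
  exact hle M hMm i hpi
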